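/- Let 0 < c ≤ 1, let ε > 0 satisfy ε² = c⁴/(3 + 18c²), and let N be a natural number such that (N+1)ε² ≤ c² < (N+2)ε². Then ∑_{n=−N}^{N} (c − ε√|n|)² > 1. -/

import Mathlib

lemma even_sum_Icc (f : ℤ → ℝ) (hf : ∀ n, f (-n) = f n) (N : ℕ) :
    ∑ n ∈ Finset.Icc (-(N : ℤ)) (N : ℤ), f n
      = f 0 + 2 * ∑ k ∈ Finset.range N, f (k + 1) := by
  induction N with
  | zero => simp
  | succ N ih =>
    have h1 : (Finset.Icc (-((N:ℤ)+1)) ((N:ℤ)+1))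
        = insert (-((N:ℤ)+1)) (insert ((N:ℤ)+1) (Finset.Icc (-(N:ℤ)) (N:ℤ))) := by
      ext n
      simp only [Finset.mem_Icc, Finset.mem_insert]
      omega
    have h2 : (-((N:ℤ)+1)) ∉ insert ((N:ℤ)+1) (Finset.Icc (-(N:ℤ)) (N:ℤ)) := by
      simp only [Finset.mem_Icc, Finset.mem_insert]
      omega
    have h3 : ((N:ℤ)+1) ∉ Finset.Icc (-(N:ℤ)) (N:ℤ) := by
      simp only [Finset.mem_Icc]; omega
    push_cast
    rw [h1, Finset.sum_insert h2, Finset.sum_insert h3, ih, Finset.sum_range_succ,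
      hf ((N:ℤ)+1)]
    push_cast
    ring

lemma gauss (N : ℕ) : ∑ k ∈ Finset.range N, ((k:ℝ)+1) = (N:ℝ)*((N:ℝ)+1)/2 := by
  induction N with
  | zero => simp
  | succ n ih => rw [Finset.sum_range_succ, ih]; push_cast; ring

lemma key_sqrt (x : ℝ) (hx : 0 ≤ x) :
    Real.sqrt x ≤ (2/3) * ((x+1) * Real.sqrt (x+1) - x * Real.sqrt x) := by
  set a := Real.sqrt x with ha
  set b := Real.sqrt (x+1) with hb
  have ha2 : a^2 = x := Real.sq_sqrt hx
  have hb2 : b^2 = x + 1 := Real.sq_sqrt (by linarith)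
  have ha0 : 0 ≤ a := Real.sqrt_nonneg _
  have hb0 : 0 ≤ b := Real.sqrt_nonneg _
  nlinarith [sq_nonneg (2*b*(x+1) - (2*a^3 + 3*a)), mul_nonneg hb0 (sq_nonneg a), mul_nonneg ha0 (sq_nonneg a), mul_nonneg (mul_nonneg hb0 hb0) hb0, sq_nonneg (b - a), sq_nonneg a]

set_option maxHeartbeats 1000000 in
/-- Concluding numerical estimate in the proof of Lemma 6.2. -/
theorem stmt5 (c ε : ℝ) (hc0 : 0 < c) (hc1 : c ≤ 1) (hε : 0 < ε)
    (hε2 : ε ^ 2 = c ^ 4 / (3 + 18 * c ^ 2)) (N : ℕ)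
    (hN1 : ((N : ℝ) + 1) * ε ^ 2 ≤ c ^ 2) (hN2 : c ^ 2 < ((N : ℝ) + 2) * ε ^ 2) :
    1 < ∑ n ∈ Finset.Icc (-(N : ℤ)) (N : ℤ), (c - ε * Real.sqrt |(n : ℝ)|) ^ 2 := by
  have hf : ∀ n : ℤ, (c - ε * Real.sqrt |((-n : ℤ) : ℝ)|) ^ 2
      = (c - ε * Real.sqrt |((n : ℤ) : ℝ)|) ^ 2 := by
    intro n; push_cast; rw [abs_neg]
  rw [even_sum_Icc (fun n => (c - ε * Real.sqrt |(n : ℝ)|) ^ 2) hf N]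
  simp only [Int.cast_zero, abs_zero, Real.sqrt_zero, mul_zero, sub_zero]
  -- rewrite each summand
  have hsummand : ∀ k : ℕ, (c - ε * Real.sqrt |(((k : ℤ) + 1 : ℤ) : ℝ)|) ^ 2
      = c^2 - 2*c*ε*Real.sqrt ((k:ℝ)+1) + ε^2 * ((k:ℝ)+1) := by
    intro k
    have h1 : |(((k : ℤ) + 1 : ℤ) : ℝ)| = (k:ℝ)+1 := by
      push_cast; rw [abs_of_nonneg]; positivity
    rw [h1]
    have h2 : Real.sqrt ((k:ℝ)+1) ^ 2 = (k:ℝ)+1 := Real.sq_sqrt (by positivity)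
    nlinarith [h2]
  have hsum : ∑ k ∈ Finset.range N, (c - ε * Real.sqrt |(((k : ℤ) + 1 : ℤ) : ℝ)|) ^ 2
      = (N:ℝ)*c^2 - 2*c*ε*(∑ k ∈ Finset.range N, Real.sqrt ((k:ℝ)+1))
        + ε^2 * ((N:ℝ)*((N:ℝ)+1)/2) := by
    rw [Finset.sum_congr rfl (fun k _ => hsummand k)]
    rw [Finset.sum_add_distrib, Finset.sum_sub_distrib, ← Finset.mul_sum, ← Finset.mul_sum]
    rw [gauss N]
    simp [Finset.sum_const, Finset.card_range, nsmul_eq_mul]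
  rw [hsum]
  -- bound the sqrt sum
  set S := ∑ k ∈ Finset.range N, Real.sqrt ((k:ℝ)+1) with hS
  set t := Real.sqrt ((N:ℝ)+1) with ht
  have ht0 : 0 ≤ t := Real.sqrt_nonneg _
  have ht2 : t^2 = (N:ℝ)+1 := Real.sq_sqrt (by positivity)
  have hSb : S ≤ (2/3) * (((N:ℝ)+1) * t - 1) := by
    have htel : ∑ k ∈ Finset.range N,
        ((((k:ℝ)+1)+1) * Real.sqrt (((k:ℝ)+1)+1) - ((k:ℝ)+1) * Real.sqrt ((k:ℝ)+1))
        = ((N:ℝ)+1) * t - 1 := by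
      have := Finset.sum_range_sub (fun k : ℕ => ((k:ℝ)+1) * Real.sqrt ((k:ℝ)+1)) N
      beta_reduce at this
      rw [ht]
      convert this using 2 with k
      · push_cast; ring_nf
      · simp
    calc S ≤ ∑ k ∈ Finset.range N,
          (2/3) * ((((k:ℝ)+1)+1) * Real.sqrt (((k:ℝ)+1)+1) - ((k:ℝ)+1) * Real.sqrt ((k:ℝ)+1)) := by
          apply Finset.sum_le_sum
          intro k _
          exact key_sqrt ((k:ℝ)+1) (by positivity)
      _ = (2/3) * (((N:ℝ)+1) * t - 1) := by rw [← Finset.mul_sum, htel]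
  -- final numeric estimate
  have htεc : t * ε ≤ c := by
    have h1 : (t*ε)^2 ≤ c^2 := by rw [mul_pow, ht2]; exact hN1
    nlinarith [mul_nonneg ht0 hε.le]
  have hc4 : c^4 = ε^2 * (3 + 18*c^2) := by
    field_simp at hε2; linarith [hε2]
  have hεc : ε^2 ≤ c^2 := by nlinarith [Nat.cast_nonneg (α := ℝ) N]
  have hmain : 1 < c^2 + 2*((N:ℝ)*c^2 - 2*c*ε*((2/3) * (((N:ℝ)+1) * t - 1))
      + ε^2 * ((N:ℝ)*((N:ℝ)+1)/2)) := by
    have hNt : ((N:ℝ)+1) = t^2 := ht2.symm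
    -- key products
    have p1 : c*ε*(((N:ℝ)+1)*t) * ε^2 ≤ c^4 := by
      have : ((N:ℝ)+1)*ε^2 * (t*ε) * c ≤ c^2 * c * c := by
        have h1 : ((N:ℝ)+1)*ε^2 * (t*ε) ≤ c^2 * c := by
          apply mul_le_mul hN1 htεc (by positivity) (by positivity)
        nlinarith [h1, hc0.le, mul_nonneg (mul_nonneg (by positivity : (0:ℝ) ≤ ((N:ℝ)+1)*ε^2) (by positivity : (0:ℝ) ≤ t*ε)) hc0.le]
      nlinarith [this]
    have p2 : (c^2 - ε^2)^2 < ((N:ℝ)+1)^2 * ε^4 := by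
      have h1 : c^2 - ε^2 < ((N:ℝ)+1) * ε^2 := by nlinarith [hN2]
      have h2 : 0 ≤ c^2 - ε^2 := by linarith
      nlinarith [h1, h2]
    have p3 : 2*c^4 - 3*c^2*ε^2 < (2*(N:ℝ)+1)*c^2*ε^2 := by
      nlinarith [mul_lt_mul_of_pos_left hN2 (by positivity : (0:ℝ) < c^2)]
    have p4 : ((N:ℝ)+1)*ε^4 ≤ c^2*ε^2 := by nlinarith [hN1, sq_nonneg ε]
    -- multiply goal through by ε^2
    nlinarith [p1, p2, p3, p4, hc4, mul_pos hε hε, mul_pos (mul_pos hc0 hε) (mul_pos hε hε), mul_pos (mul_pos hε hε) (mul_pos hε hε)]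
  nlinarith [hmain, hSb, mul_pos hc0 hε]
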